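/- Let X be a variety, 𝔸¹_X = X × 𝔸¹ with the 𝔾_m-action on the second factor, and let L be a 𝔾_m-linearized line bundle on 𝔸¹_X such that 𝔾_m acts trivially on L restricted to X × {0}. Then L is 𝔾_m-equivariantly isomorphic to the pullback of a line bundle on X via the projection 𝔸¹_X → X. -/

import Mathlib

open Polynomial TensorProduct

section Aux

variable {R : Type*} [CommRing R] {M : Type*} [AddCommGroup M]
    [Module (Polynomial R) M] [Module R M] [IsScalarTower R (Polynomial R) M]

/-- Multiplication by a power of `X` shifts degrees. -/
lemma aux_pow_mem (grading : ℤ → Submodule R M)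
    (hcompat : ∀ d : ℤ, ∀ m ∈ grading d,
      (Polynomial.X : Polynomial R) • m ∈ grading (d + 1))
    (k : ℕ) (e : ℤ) (m : M) (hm : m ∈ grading e) :
    ((Polynomial.X : Polynomial R) ^ k) • m ∈ grading (e + k) := by
  induction k with
  | zero => simpa using hm
  | succ n ih =>
      have h := hcompat (e + n) _ ih
      have : ((Polynomial.X : Polynomial R) ^ (n + 1)) • m
          = (Polynomial.X : Polynomial R) • (((Polynomial.X : Polynomial R) ^ n) • m) := by
        rw [pow_succ, mul_comm, mul_smul]
      rw [this]
      convert h using 2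
      push_cast
      ring

/-- `X` (and its powers) act without torsion on a projective module. -/
lemma aux_torsionfree (hproj : Module.Projective (Polynomial R) M)
    (k : ℕ) (m : M) (h : ((Polynomial.X : Polynomial R) ^ k) • m = 0) : m = 0 := by
  obtain ⟨s, hs⟩ := Module.projective_def.mp hproj
  have hsinj : Function.Injective s := hs.injective
  apply hsinj
  rw [map_zero]
  have h2 : ((Polynomial.X : Polynomial R) ^ k) • s m = 0 := by
    rw [← map_smul, h, map_zero]
  ext a
  have h3 : (Polynomial.X : Polynomial R) ^ k * (s m) a = 0 := by
    have := congrFun (congrArg DFunLike.coe h2) a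
    simpa [Finsupp.smul_apply, smul_eq_mul] using this
  have : (s m) a = 0 := by
    ext i
    have := congrArg (fun q => Polynomial.coeff q (i + k)) h3
    simpa [Polynomial.coeff_X_pow_mul] using this
  simp [this]

/-- An element divisible by all powers of `X` in a projective module is zero. -/
lemma aux_inf_div (hproj : Module.Projective (Polynomial R) M)
    (m : M) (h : ∀ k : ℕ, ∃ m' : M, m = ((Polynomial.X : Polynomial R) ^ k) • m') :
    m = 0 := by
  obtain ⟨s, hs⟩ := Module.projective_def.mp hproj
  have hsinj : Function.Injective s := hs.injective
  apply hsinj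
  rw [map_zero]
  ext a
  have hdvd : ∀ k : ℕ, (Polynomial.X : Polynomial R) ^ k ∣ (s m) a := by
    intro k
    obtain ⟨m', hm'⟩ := h k
    refine ⟨(s m') a, ?_⟩
    rw [hm', map_smul]
    simp [Finsupp.smul_apply, smul_eq_mul]
  have : (s m) a = 0 := by
    ext i
    have := (Polynomial.X_pow_dvd_iff.mp (hdvd (i + 1))) i (Nat.lt_succ_self i)
    simpa using this
  simp [this]

/-- Homogeneous division: a homogeneous element of nonzero degree is `X` times a
homogeneous element of one lower degree. -/
lemma aux_homog_div (grading : ℤ → Submodule R M) [DirectSum.Decomposition grading]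
    (hcompat : ∀ d : ℤ, ∀ m ∈ grading d,
      (Polynomial.X : Polynomial R) • m ∈ grading (d + 1))
    (htriv : ∀ d : ℤ, d ≠ 0 → ∀ m ∈ grading d,
      ∃ m' : M, m = (Polynomial.X : Polynomial R) • m')
    (d : ℤ) (hd : d ≠ 0) (m : M) (hm : m ∈ grading d) :
    ∃ m' ∈ grading (d - 1), m = (Polynomial.X : Polynomial R) • m' := by
  classical
  obtain ⟨w, hw⟩ := htriv d hd m hm
  refine ⟨(DirectSum.decompose grading w (d - 1) : M),
    (DirectSum.decompose grading w (d - 1)).2, ?_⟩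
  have hw' : w = ∑ i ∈ (DirectSum.decompose grading w).support,
      ((DirectSum.decompose grading w i : grading i) : M) :=
    (DirectSum.sum_support_decompose grading w).symm
  have hm2 : m = ∑ i ∈ (DirectSum.decompose grading w).support,
      (Polynomial.X : Polynomial R) • ((DirectSum.decompose grading w i : grading i) : M) := by
    rw [hw]
    conv_lhs => rw [hw']
    rw [Finset.smul_sum]
  -- apply the degree-d projection
  have key : m = ((DirectSum.decompose grading m d : grading d) : M) :=
    (DirectSum.decompose_of_mem_same grading hm).symm
  rw [key]
  conv_lhs => rw [hm2]
  rw [DirectSum.decompose_sum]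
  rw [DFinsupp.finset_sum_apply]
  rw [AddSubmonoidClass.coe_finset_sum]
  have hterm : ∀ i ∈ (DirectSum.decompose grading w).support,
      ((DirectSum.decompose grading
          ((Polynomial.X : Polynomial R) •
            ((DirectSum.decompose grading w i : grading i) : M)) d : grading d) : M)
        = if i = d - 1 then
            (Polynomial.X : Polynomial R) • ((DirectSum.decompose grading w i : grading i) : M)
          else 0 := by
    intro i _
    have hmem := hcompat i _ (DirectSum.decompose grading w i).2
    by_cases hi : i = d - 1
    · subst hi
      simp only [if_pos rfl]
      have : d - 1 + 1 = d := by ring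
      rw [this] at hmem
      exact DirectSum.decompose_of_mem_same grading hmem
    · rw [if_neg hi]
      have hne : i + 1 ≠ d := by omega
      exact DirectSum.decompose_of_mem_ne grading hmem hne
  rw [Finset.sum_congr rfl hterm]
  rw [Finset.sum_ite_eq' (DirectSum.decompose grading w).support (d - 1)]
  by_cases hsupp : d - 1 ∈ (DirectSum.decompose grading w).support
  · rw [if_pos hsupp]
  · rw [if_neg hsupp]
    have : (DirectSum.decompose grading w) (d - 1) = 0 := DFinsupp.notMem_support_iff.mp hsupp
    rw [this]
    simp

/-- Negative graded pieces vanish. -/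
lemma aux_neg_zero (hproj : Module.Projective (Polynomial R) M)
    (grading : ℤ → Submodule R M) [DirectSum.Decomposition grading]
    (hcompat : ∀ d : ℤ, ∀ m ∈ grading d,
      (Polynomial.X : Polynomial R) • m ∈ grading (d + 1))
    (htriv : ∀ d : ℤ, d ≠ 0 → ∀ m ∈ grading d,
      ∃ m' : M, m = (Polynomial.X : Polynomial R) • m')
    (d : ℤ) (hd : d < 0) (m : M) (hm : m ∈ grading d) : m = 0 := by
  apply aux_inf_div hproj
  intro k
  suffices h : ∃ m' ∈ grading (d - k), m = ((Polynomial.X : Polynomial R) ^ k) • m' by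
    obtain ⟨m', _, hm'⟩ := h
    exact ⟨m', hm'⟩
  induction k with
  | zero => exact ⟨m, by simpa using hm, by simp⟩
  | succ n ih =>
      obtain ⟨m', hm'mem, hm'⟩ := ih
      have hne : d - (n : ℤ) ≠ 0 := by omega
      obtain ⟨m'', hm''mem, hm''⟩ :=
        aux_homog_div grading hcompat htriv (d - n) hne m' hm'mem
      refine ⟨m'', by convert hm''mem using 2; push_cast; ring, ?_⟩
      rw [hm', hm'', smul_smul, ← pow_succ]

/-- Nonnegative graded pieces are `X^d` times degree-zero elements. -/
lemma aux_pow_div (hproj : Module.Projective (Polynomial R) M)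
    (grading : ℤ → Submodule R M) [DirectSum.Decomposition grading]
    (hcompat : ∀ d : ℤ, ∀ m ∈ grading d,
      (Polynomial.X : Polynomial R) • m ∈ grading (d + 1))
    (htriv : ∀ d : ℤ, d ≠ 0 → ∀ m ∈ grading d,
      ∃ m' : M, m = (Polynomial.X : Polynomial R) • m')
    (d : ℕ) (m : M) (hm : m ∈ grading (d : ℤ)) :
    ∃ m0 ∈ grading 0, m = ((Polynomial.X : Polynomial R) ^ d) • m0 := by
  induction d generalizing m with
  | zero => refine ⟨m, by simpa using hm, by simp⟩
  | succ n ih =>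
      have hne : ((n : ℤ) + 1) ≠ 0 := by omega
      have hm' : m ∈ grading ((n : ℤ) + 1) := by convert hm using 2 <;> push_cast <;> ring
      obtain ⟨m', hm'mem, hme⟩ := aux_homog_div grading hcompat htriv _ hne m hm'
      have : m' ∈ grading (n : ℤ) := by convert hm'mem using 2; ring
      obtain ⟨m0, hm0mem, hm0⟩ := ih m' this
      exact ⟨m0, hm0mem, by rw [hme, hm0, smul_smul, ← pow_succ']⟩

/-- A finite sum of homogeneous elements of distinct degrees that is zero has all
terms zero. -/
lemma aux_sum_zero (grading : ℤ → Submodule R M) [DirectSum.Decomposition grading]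
    (N : ℕ) (v : ℕ → M) (hv : ∀ d : ℕ, v d ∈ grading (d : ℤ))
    (h : ∑ d ∈ Finset.range N, v d = 0) :
    ∀ e < N, v e = 0 := by
  classical
  intro e he
  have := congrArg (fun x => ((DirectSum.decompose grading x (e : ℤ) : grading (e : ℤ)) : M)) h
  simp only [DirectSum.decompose_sum, DirectSum.decompose_zero] at this
  rw [DFinsupp.finset_sum_apply] at this
  rw [AddSubmonoidClass.coe_finset_sum] at this
  simp only [DFinsupp.zero_apply, ZeroMemClass.coe_zero] at this
  have hterm : ∀ d ∈ Finset.range N,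
      ((DirectSum.decompose grading (v d) (e : ℤ) : grading (e : ℤ)) : M)
        = if d = e then v d else 0 := by
    intro d _
    by_cases hd : d = e
    · subst hd; rw [if_pos rfl]; exact DirectSum.decompose_of_mem_same grading (hv d)
    · rw [if_neg hd]
      have : (d : ℤ) ≠ (e : ℤ) := by exact_mod_cast hd
      exact DirectSum.decompose_of_mem_ne grading (hv d) this
  rw [Finset.sum_congr rfl hterm, Finset.sum_ite_eq' (Finset.range N) e,
    if_pos (Finset.mem_range.mpr he)] at this
  have hz : ((0 : grading (e : ℤ)) : M) = (0 : M) := rfl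
  simpa using this

end Aux

/-- algebraic model, over an affine chart `X = Spec R`.
A line bundle on `𝔸¹_X` is a finite projective `R[t]`-module `M` of rank one;
a `𝔾_m`-linearization of `M` (for the scaling action on the `𝔸¹`-factor) is a
`ℤ`-grading `M = ⊕_d M_d` by `R`-submodules, compatible with the grading of
`R[t]` in which `t` has degree `1` (`hcompat`).  Triviality of the `𝔾_m`-action
on `L|_{X × {0}}`, i.e. on `M / tM`, says that every homogeneous element of
nonzero degree is divisible by `t` (`htriv`).  Conclusion: `M` is
`𝔾_m`-equivariantly the pullback of a line bundle on `X`, namely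
`M ≅ R[t] ⊗_R M_0` as `R[t]`-modules, with `t^d ⊗ M_0` landing in degree `d`. -/
theorem gm_linearized_bundle_descends
    (R : Type*) [CommRing R] (M : Type*) [AddCommGroup M]
    [Module (Polynomial R) M] [Module R M] [IsScalarTower R (Polynomial R) M]
    (hproj : Module.Projective (Polynomial R) M)
    (hfin : Module.Finite (Polynomial R) M)
    (hrank : ∀ p : PrimeSpectrum (Polynomial R),
      Module.finrank (Localization.AtPrime p.asIdeal)
        (LocalizedModule p.asIdeal.primeCompl M) = 1)
    (grading : ℤ → Submodule R M) [DirectSum.Decomposition grading]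
    (hcompat : ∀ d : ℤ, ∀ m ∈ grading d,
      (Polynomial.X : Polynomial R) • m ∈ grading (d + 1))
    (htriv : ∀ d : ℤ, d ≠ 0 → ∀ m ∈ grading d,
      ∃ m' : M, m = (Polynomial.X : Polynomial R) • m') :
    ∃ e : (TensorProduct R (Polynomial R) ↥(grading 0)) ≃ₗ[Polynomial R] M,
      ∀ (d : ℕ) (m : grading 0),
        e ((Polynomial.X ^ d : Polynomial R) ⊗ₜ[R] m) ∈ grading (d : ℤ) := by
  classical
  set f : ↥(grading 0) →ₗ[R] M := (grading 0).subtype with hf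
  set φ : (Polynomial R) ⊗[R] ↥(grading 0) →ₗ[Polynomial R] M :=
    f.liftBaseChange (Polynomial R) with hφ
  have hφ_tmul : ∀ (p : Polynomial R) (m : ↥(grading 0)), φ (p ⊗ₜ[R] m) = p • (m : M) := by
    intro p m; rfl
  -- every element of the tensor product is a finite sum of `X^d ⊗ m_d`
  have hrep : ∀ x : (Polynomial R) ⊗[R] ↥(grading 0), ∃ (N : ℕ) (μ : ℕ → ↥(grading 0)),
      x = ∑ d ∈ Finset.range N, ((Polynomial.X : Polynomial R) ^ d) ⊗ₜ[R] μ d := by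
    intro x
    induction x with
    | zero => exact ⟨0, fun _ => 0, by simp⟩
    | tmul p m =>
        refine ⟨p.natDegree + 1, fun d => p.coeff d • m, ?_⟩
        conv_lhs => rw [p.as_sum_range_C_mul_X_pow]
        rw [sum_tmul]
        apply Finset.sum_congr rfl
        intro d _
        rw [← smul_tmul]
        congr 1
        rw [smul_eq_C_mul]
    | add x y hx hy =>
        obtain ⟨N₁, μ₁, h₁⟩ := hx
        obtain ⟨N₂, μ₂, h₂⟩ := hy
        refine ⟨max N₁ N₂, fun d => (if d < N₁ then μ₁ d else 0) +
          (if d < N₂ then μ₂ d else 0), ?_⟩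
        have hsplit : ∀ (N' : ℕ) (μ : ℕ → ↥(grading 0)), N' ≤ max N₁ N₂ →
            (∑ d ∈ Finset.range (max N₁ N₂),
              ((Polynomial.X : Polynomial R) ^ d) ⊗ₜ[R] (if d < N' then μ d else 0))
            = ∑ d ∈ Finset.range N', ((Polynomial.X : Polynomial R) ^ d) ⊗ₜ[R] μ d := by
          intro N' μ hN'
          rw [← Finset.sum_subset (Finset.range_subset_range.mpr hN')]
          · apply Finset.sum_congr rfl
            intro d hd
            rw [if_pos (Finset.mem_range.mp hd)]
          · intro d _ hd
            have hlt : ¬ d < N' := by simpa using hd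
            rw [if_neg hlt, tmul_zero]
        simp only [tmul_add, Finset.sum_add_distrib]
        rw [hsplit N₁ μ₁ (le_max_left _ _), hsplit N₂ μ₂ (le_max_right _ _), h₁, h₂]
  -- injectivity
  have hinj : Function.Injective φ := by
    rw [injective_iff_map_eq_zero]
    intro x hx
    obtain ⟨N, μ, hxrep⟩ := hrep x
    have hφx : ∑ d ∈ Finset.range N, ((Polynomial.X : Polynomial R) ^ d) • ((μ d : M)) = 0 := by
      rw [hxrep] at hx
      rw [map_sum] at hx
      simpa [hφ_tmul] using hx
    have hvmem : ∀ d : ℕ, ((Polynomial.X : Polynomial R) ^ d) • ((μ d : M)) ∈ grading (d : ℤ) := by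
      intro d
      have := aux_pow_mem grading hcompat d 0 (μ d : M) (μ d).2
      simpa using this
    have hzero := aux_sum_zero grading N _ hvmem hφx
    have hμ : ∀ d < N, μ d = 0 := by
      intro d hd
      have := aux_torsionfree hproj d (μ d : M) (hzero d hd)
      exact Subtype.ext this
    rw [hxrep]
    apply Finset.sum_eq_zero
    intro d hd
    rw [hμ d (Finset.mem_range.mp hd)]
    simp
  -- surjectivity
  have hsurj : Function.Surjective φ := by
    intro m
    have hmem : m ∈ iSup grading := by
      rw [(DirectSum.Decomposition.isInternal grading).submodule_iSup_eq_top]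
      trivial
    refine Submodule.iSup_induction grading (motive := fun m => ∃ x, φ x = m) hmem ?_ ⟨0, map_zero φ⟩ ?_
    · intro d m' hm'
      rcases lt_or_ge d 0 with hd | hd
      · exact ⟨0, by rw [map_zero, aux_neg_zero hproj grading hcompat htriv d hd m' hm']⟩
      · lift d to ℕ using hd
        obtain ⟨m0, hm0mem, hm0⟩ := aux_pow_div hproj grading hcompat htriv d m' hm'
        exact ⟨((Polynomial.X : Polynomial R) ^ d) ⊗ₜ[R] (⟨m0, hm0mem⟩ : grading 0), by
          rw [hφ_tmul, hm0]⟩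
    · rintro x y ⟨a, ha⟩ ⟨b, hb⟩
      exact ⟨a + b, by rw [map_add, ha, hb]⟩
  refine ⟨LinearEquiv.ofBijective φ ⟨hinj, hsurj⟩, ?_⟩
  intro d m
  have : (LinearEquiv.ofBijective φ ⟨hinj, hsurj⟩) ((Polynomial.X ^ d : Polynomial R) ⊗ₜ[R] m)
      = ((Polynomial.X : Polynomial R) ^ d) • (m : M) := hφ_tmul _ m
  rw [this]
  have := aux_pow_mem grading hcompat d 0 (m : M) m.2
  simpa using this
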